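/- Every element of a finitely separable ring is algebraic: if $K$ is a finitely separable ring and $a \in K$, then there exists a nonzero polynomial $f(x)$ with integer coefficients and zero constant term such that $f(a) = 0$ in $K$. -/

import Mathlib

/-- A (not necessarily unital) ring `K` is finitely separable if every element `a`
lying outside a subring `A` can be separated from `A` by a homomorphism to a finite ring. -/
def IsFinSep (K : Type) [NonUnitalRing K] : Prop :=
  ∀ (a : K) (A : NonUnitalSubring K), a ∉ A →
    ∃ (F : Type) (_ : NonUnitalRing F) (_ : Finite F),
      ∃ φ : K →ₙ+* F, φ a ∉ ⇑φ '' (A : Set K)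

/-- `ppow a n = a ^ (n + 1)`, the positive powers of `a` in a non-unital ring. -/
def ppow {K : Type} [NonUnitalRing K] (a : K) : ℕ → K
  | 0 => a
  | n + 1 => ppow a n * a

/-- Evaluation of an integer polynomial (whose constant term is ignored, hence
meaningful for polynomials with zero constant term) at an element of a non-unital ring. -/
def evalnc {K : Type} [NonUnitalRing K] (p : Polynomial ℤ) (a : K) : K :=
  ∑ i ∈ Finset.range p.natDegree, p.coeff (i + 1) • ppow a i

section helpers
variable {K : Type} [NonUnitalRing K]

open Polynomial Unitization

lemma ppow_succ (a : K) (n : ℕ) : ppow a (n + 1) = ppow a n * a := rfl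

lemma inr_ppow (a : K) (n : ℕ) :
    ((ppow a n : K) : Unitization ℤ K) = ((a : Unitization ℤ K)) ^ (n+1) := by
  induction n with
  | zero => simp [ppow]
  | succ n ih => rw [ppow, pow_succ, ← ih, Unitization.inr_mul]

lemma evalnc_eq_snd (q : Polynomial ℤ) (a : K) :
    evalnc q a = (Polynomial.aeval (a : Unitization ℤ K) q).snd := by
  conv_rhs => rw [q.as_sum_range' (q.natDegree + 1) (lt_add_one _)]
  rw [map_sum]
  have hsnd : (∑ x ∈ Finset.range (q.natDegree + 1),
      (aeval (a : Unitization ℤ K)) ((monomial x) (q.coeff x))).snd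
      = ∑ x ∈ Finset.range (q.natDegree + 1),
        ((aeval (a : Unitization ℤ K)) ((monomial x) (q.coeff x))).snd :=
    map_sum (Unitization.sndHom ℤ ℤ K) _ _
  rw [hsnd]
  have hterm : ∀ x : ℕ, ((aeval (a : Unitization ℤ K)) ((monomial x) (q.coeff x))).snd
      = q.coeff x • ((a : Unitization ℤ K) ^ x).snd := by
    intro x
    rw [aeval_monomial, ← Algebra.smul_def, Unitization.snd_smul]
  simp only [hterm]
  rw [Finset.sum_range_succ']
  simp only [pow_zero, Unitization.snd_one, smul_zero, add_zero]
  apply Finset.sum_congr rfl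
  intro i _
  rw [← inr_ppow, Unitization.snd_inr]

lemma evalnc_add (p q : Polynomial ℤ) (a : K) :
    evalnc (p + q) a = evalnc p a + evalnc q a := by
  simp [evalnc_eq_snd, map_add]

lemma evalnc_neg (p : Polynomial ℤ) (a : K) :
    evalnc (-p) a = - evalnc p a := by
  simp [evalnc_eq_snd, map_neg]

lemma evalnc_sub (p q : Polynomial ℤ) (a : K) :
    evalnc (p - q) a = evalnc p a - evalnc q a := by
  rw [sub_eq_add_neg, evalnc_add, evalnc_neg, sub_eq_add_neg]

lemma fst_aeval (q : Polynomial ℤ) (a : K) :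
    (Polynomial.aeval (a : Unitization ℤ K) q).fst = q.coeff 0 := by
  have := Polynomial.aeval_algHom_apply (Unitization.fstHom ℤ K) (a : Unitization ℤ K) q
  rw [Unitization.fstHom_apply] at this
  rw [Unitization.fst_inr] at this
  rw [show ((aeval (a : Unitization ℤ K)) q).fst
      = (fstHom ℤ K) ((aeval (a : Unitization ℤ K)) q) from rfl, ← this,
    Polynomial.aeval_def, Polynomial.eval₂_at_zero]
  simp

lemma evalnc_mul {p q : Polynomial ℤ} (hp : p.coeff 0 = 0) (hq : q.coeff 0 = 0) (a : K) :
    evalnc (p * q) a = evalnc p a * evalnc q a := by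
  simp only [evalnc_eq_snd, map_mul]
  rw [Unitization.snd_mul, fst_aeval, fst_aeval, hp, hq]
  simp

lemma evalnc_X (a : K) : evalnc Polynomial.X a = a := by
  simp [evalnc, Polynomial.natDegree_X, ppow]

lemma evalnc_C_mul_pow (m : ℤ) (k : ℕ) (a : K) :
    evalnc (Polynomial.C m * Polynomial.X ^ (k+1)) a = m • ppow a k := by
  rw [evalnc_eq_snd, map_mul, aeval_C, aeval_X_pow, ← Algebra.smul_def,
    Unitization.snd_smul, ← inr_ppow, Unitization.snd_inr]

lemma map_ppow {F : Type} [NonUnitalRing F] (φ : K →ₙ+* F) (a : K) (n : ℕ) :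
    φ (ppow a n) = ppow (φ a) n := by
  induction n with
  | zero => rfl
  | succ n ih => rw [ppow, map_mul, ih]; rfl

lemma map_evalnc {F : Type} [NonUnitalRing F] (φ : K →ₙ+* F) (q : Polynomial ℤ) (a : K) :
    φ (evalnc q a) = evalnc q (φ a) := by
  unfold evalnc
  rw [map_sum]
  apply Finset.sum_congr rfl
  intro i _
  rw [map_zsmul, map_ppow]

/-- value of an integer polynomial at `1/2`. -/
noncomputable def nuval (q : Polynomial ℤ) : ℚ :=
  Polynomial.eval₂ (Int.castRingHom ℚ) (2⁻¹ : ℚ) q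

lemma nuval_add (p q : Polynomial ℤ) : nuval (p + q) = nuval p + nuval q :=
  Polynomial.eval₂_add _ _

lemma nuval_neg (p : Polynomial ℤ) : nuval (-p) = - nuval p := by
  unfold nuval
  rw [Polynomial.eval₂_neg]

lemma nuval_mul (p q : Polynomial ℤ) : nuval (p * q) = nuval p * nuval q :=
  Polynomial.eval₂_mul _ _

lemma nuval_X : nuval Polynomial.X = 2⁻¹ := Polynomial.eval₂_X _ _

end helpers


/-- Every element of a finitely separable ring is algebraic. -/
theorem stmt5 (K : Type) [NonUnitalRing K] (hK : IsFinSep K) (a : K) :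
    ∃ p : Polynomial ℤ, p ≠ 0 ∧ p.coeff 0 = 0 ∧ evalnc p a = 0 := by
  by_contra hcon
  push_neg at hcon
  -- the subring A of "good" values
  set S : Set K :=
    {y | ∃ q : Polynomial ℤ, q.coeff 0 = 0 ∧ (∃ z : ℤ, nuval q = (z : ℚ)) ∧ evalnc q a = y}
    with hS
  have zero_mem : (0 : K) ∈ S := by
    refine ⟨0, by simp, ⟨0, by simp [nuval]⟩, by simp [evalnc]⟩
  have add_mem : ∀ {x y : K}, x ∈ S → y ∈ S → x + y ∈ S := by
    rintro x y ⟨q, hq0, ⟨z, hz⟩, rfl⟩ ⟨r, hr0, ⟨w, hw⟩, rfl⟩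
    exact ⟨q + r, by simp [Polynomial.coeff_add, hq0, hr0],
      ⟨z + w, by rw [nuval_add, hz, hw]; push_cast; ring⟩, evalnc_add q r a⟩
  have neg_mem : ∀ {x : K}, x ∈ S → -x ∈ S := by
    rintro x ⟨q, hq0, ⟨z, hz⟩, rfl⟩
    exact ⟨-q, by simp [hq0], ⟨-z, by rw [nuval_neg, hz]; push_cast; ring⟩, evalnc_neg q a⟩
  have mul_mem : ∀ {x y : K}, x ∈ S → y ∈ S → x * y ∈ S := by
    rintro x y ⟨q, hq0, ⟨z, hz⟩, rfl⟩ ⟨r, hr0, ⟨w, hw⟩, rfl⟩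
    exact ⟨q * r, by simp [Polynomial.mul_coeff_zero, hq0, hr0],
      ⟨z * w, by rw [nuval_mul, hz, hw]; push_cast; ring⟩, evalnc_mul hq0 hr0 a⟩
  let A : NonUnitalSubring K :=
    { carrier := S
      zero_mem' := zero_mem
      add_mem' := add_mem
      neg_mem' := neg_mem
      mul_mem' := mul_mem }
  -- a is not in A
  have ha : a ∉ A := by
    rintro ⟨q, hq0, ⟨z, hz⟩, hqa⟩
    have hqX : q ≠ Polynomial.X := by
      intro h
      rw [h, nuval_X] at hz
      have h2 : ((2 * z : ℤ) : ℚ) = 1 := by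
        push_cast
        rw [← hz]
        norm_num
      have : (2 * z : ℤ) = 1 := by exact_mod_cast h2
      omega
    refine hcon (Polynomial.X - q) ?_ ?_ ?_
    · intro h0
      exact hqX (by rw [sub_eq_zero] at h0; exact h0.symm)
    · simp [hq0]
    · rw [evalnc_sub, evalnc_X, hqa, sub_self]
  obtain ⟨F, hF1, hF2, φ, hφ⟩ := hK a A ha
  -- pigeonhole: positive powers of b repeat
  set b := φ a with hb
  have hrep : ∃ i j : ℕ, i < j ∧ ppow b i = ppow b j := by
    obtain ⟨i, j, hne, he⟩ :=
      Finite.exists_ne_map_eq_of_infinite (f := fun n : ℕ => ppow b n)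
    rcases hne.lt_or_gt with h | h
    · exact ⟨i, j, h, he⟩
    · exact ⟨j, i, h, he.symm⟩
  obtain ⟨i, j, hij, hpp⟩ := hrep
  set d := j - i - 1 with hd
  have hj : j = i + d + 1 := by omega
  -- the witness polynomial
  set m : ℤ := 2 ^ (i + d + 2) with hm
  set q : Polynomial ℤ :=
    Polynomial.X + Polynomial.C m * (Polynomial.X ^ (i + d + 3) - Polynomial.X ^ (i + 2))
    with hqdef
  have hq0 : q.coeff 0 = 0 := by
    simp [hqdef, Polynomial.coeff_add, Polynomial.coeff_X_zero, Polynomial.coeff_C_mul,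
      Polynomial.coeff_sub, Polynomial.coeff_X_pow]
  have hnu : nuval q = ((1 - 2 ^ d : ℤ) : ℚ) := by
    unfold nuval
    rw [hqdef]
    simp only [Polynomial.eval₂_add, Polynomial.eval₂_mul, Polynomial.eval₂_C,
      Polynomial.eval₂_X, Polynomial.eval₂_sub, Polynomial.eval₂_X_pow]
    rw [hm]
    push_cast
    rw [show i + d + 3 = (i + 2) + (d + 1) by omega, show i + d + 2 = (i + 2) + d by omega]
    rw [pow_add, pow_add, pow_add]
    have h1 : ((2 : ℚ) ^ (i + 2)) * ((2⁻¹ : ℚ) ^ (i + 2)) = 1 := by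
      rw [← mul_pow]; norm_num
    have h2 : ((2 : ℚ) ^ d) * ((2⁻¹ : ℚ) ^ d) = 1 := by
      rw [← mul_pow]; norm_num
    simp only [eq_intCast]
    push_cast
    field_simp
    ring_nf
    have h3 : ((1:ℚ) / 2) ^ i * 2 ^ i = 1 := by rw [← mul_pow]; norm_num
    have h4 : ((1:ℚ) / 2) ^ d * 2 ^ d = 1 := by rw [← mul_pow]; norm_num
    linear_combination ((1 / 2 : ℚ) ^ d * 2 ^ d - 2 * 2 ^ d) * h3 + h4
  -- q evaluates to b at b
  have hqb : evalnc q b = b := by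
    rw [hqdef, mul_sub, evalnc_add, evalnc_sub, evalnc_X,
      show i + d + 3 = (i + d + 2) + 1 by omega,
      show i + 2 = (i + 1) + 1 by omega,
      evalnc_C_mul_pow, evalnc_C_mul_pow]
    have : ppow b (i + d + 2) = ppow b (i + 1) := by
      rw [show i + d + 2 = (i + d + 1) + 1 by omega, ppow_succ, ← hj, ← hpp, ← ppow_succ]
    rw [this]
    simp
  -- contradiction
  apply hφ
  refine ⟨evalnc q a, ⟨q, hq0, ⟨1 - 2 ^ d, hnu⟩, rfl⟩, ?_⟩
  rw [map_evalnc, ← hb, hqb]
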